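/- Ex post efficiency implies unanimity: if a preference profile admits a perfect assignment p, then every ex post efficient random assignment for that profile equals p. Consequently, every ex post efficient assignment rule satisfies unanimity. -/

import Mathlib

open Finset
open scoped Classical

/-- A (binary-relation) preference over `m` objects; `R a b` means `a ≿ b`. -/
abbrev Pref (m : ℕ) := Fin m → Fin m → Prop

/-- A strict (linear) preference: reflexive, transitive, antisymmetric and total
weak relation `≿`, i.e. a linear order on the objects. -/
def IsStrictPref {m : ℕ} (R : Pref m) : Prop :=
  (∀ a, R a a) ∧ (∀ a b c, R a b → R b c → R a c) ∧
  (∀ a b, R a b → R b a → a = b) ∧ (∀ a b, R a b ∨ R b a)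

/-- A profile of strict preferences, one for each agent. -/
def ValidProfile {n m : ℕ} (pref : Fin n → Pref m) : Prop :=
  ∀ i, IsStrictPref (pref i)

/-- `x` (first-order) stochastically dominates `y` w.r.t. preference `R`:
for every object `o`, the total mass on objects weakly preferred to `o`
under `x` is at least that under `y`. -/
def sdPrefers {m : ℕ} (R : Pref m) (x y : Fin m → ℝ) : Prop :=
  ∀ o : Fin m,
    ∑ o' ∈ univ.filter (fun o' => R o' o), x o' ≥
    ∑ o' ∈ univ.filter (fun o' => R o' o), y o'

/-- Strict stochastic dominance. -/
def sdStrict {m : ℕ} (R : Pref m) (x y : Fin m → ℝ) : Prop :=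
  sdPrefers R x y ∧ ¬ sdPrefers R y x

/-- Strict downward-lexicographic (DL) preference of `x` over `y`:
at the most preferred object where they differ, `x` gives more. -/
def dlStrict {m : ℕ} (R : Pref m) (x y : Fin m → ℝ) : Prop :=
  ∃ o : Fin m, x o > y o ∧ ∀ o', x o' ≠ y o' → R o o'

/-- Weak DL preference. -/
def dlPrefers {m : ℕ} (R : Pref m) (x y : Fin m → ℝ) : Prop :=
  x = y ∨ dlStrict R x y

/-- A random assignment: entries in `[0,1]`, every object fully allocated
(column sums `1`), every agent receiving `c` units (row sums `c`). -/
def IsRandomAssignment (n m c : ℕ) (p : Fin n → Fin m → ℝ) : Prop :=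
  (∀ i o, 0 ≤ p i o ∧ p i o ≤ 1) ∧
  (∀ o, ∑ i, p i o = 1) ∧
  (∀ i, ∑ o, p i o = (c : ℝ))

/-- A discrete (0/1) matrix. -/
def IsDiscreteMatrix (n m : ℕ) (p : Fin n → Fin m → ℝ) : Prop :=
  ∀ i o, p i o = 0 ∨ p i o = 1

/-- `p` is SD-efficient at profile `pref`: no random assignment `q` weakly
SD-dominates it for everyone and strictly for someone. -/
def SDEfficientAssignment (n m c : ℕ) (pref : Fin n → Pref m)
    (p : Fin n → Fin m → ℝ) : Prop :=
  ¬ ∃ q : Fin n → Fin m → ℝ, IsRandomAssignment n m c q ∧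
      (∀ i, sdPrefers (pref i) (q i) (p i)) ∧
      ∃ j, sdStrict (pref j) (q j) (p j)

/-- Anonymity of an assignment rule: permuting the agents' reports permutes
their allocations accordingly. -/
def Anonymous (n m : ℕ) (f : (Fin n → Pref m) → Fin n → Fin m → ℝ) : Prop :=
  ∀ (pref : Fin n → Pref m) (σ : Equiv.Perm (Fin n)), ValidProfile pref →
    ∀ i, f (fun j => pref (σ j)) i = f pref (σ i)

/-- Neutrality of an assignment rule: relabelling the objects (in all
preferences) relabels the returned assignment accordingly. -/
def Neutral (n m : ℕ) (f : (Fin n → Pref m) → Fin n → Fin m → ℝ) : Prop :=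
  ∀ (pref : Fin n → Pref m) (τ : Equiv.Perm (Fin m)), ValidProfile pref →
    ∀ i o, f (fun j a b => pref j (τ.symm a) (τ.symm b)) i o = f pref i (τ.symm o)

/-- Weak SD-strategyproofness: no agent can misreport and obtain an allocation
he strictly SD-prefers (w.r.t. his true preference). -/
def WeakSDSP (n m : ℕ) (f : (Fin n → Pref m) → Fin n → Fin m → ℝ) : Prop :=
  ¬ ∃ (pref : Fin n → Pref m) (i : Fin n) (R' : Pref m),
      ValidProfile pref ∧ IsStrictPref R' ∧
      sdStrict (pref i) (f (Function.update pref i R') i) (f pref i)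

/-- Weak SD group-strategyproofness: no nonempty coalition can jointly
misreport so that every member strictly SD-prefers the new allocation. -/
def WeakSDGroupSP (n m : ℕ) (f : (Fin n → Pref m) → Fin n → Fin m → ℝ) : Prop :=
  ¬ ∃ (pref pref' : Fin n → Pref m) (S : Finset (Fin n)),
      ValidProfile pref ∧ S.Nonempty ∧
      (∀ i ∈ S, IsStrictPref (pref' i)) ∧
      (∀ i ∉ S, pref' i = pref i) ∧
      ∀ i ∈ S, sdStrict (pref i) (f pref' i) (f pref i)

/-- DL-strategyproofness: truth-telling always yields a weakly DL-preferred
allocation. -/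
def DLSP (n m : ℕ) (f : (Fin n → Pref m) → Fin n → Fin m → ℝ) : Prop :=
  ∀ (pref : Fin n → Pref m) (i : Fin n) (R' : Pref m),
    ValidProfile pref → IsStrictPref R' →
    dlPrefers (pref i) (f pref i) (f (Function.update pref i R') i)

/-- The set of the `c` most preferred objects under the strict preference `R`:
objects having at most `c` objects weakly preferred to them. -/
noncomputable def topSet (m c : ℕ) (R : Pref m) : Finset (Fin m) :=
  univ.filter (fun o => (univ.filter (fun o' => R o' o)).card ≤ c)

/-- A perfect assignment: every agent receives each of his `c` most preferred
objects with probability `1`. -/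
def PerfectAssignment (n m c : ℕ) (pref : Fin n → Pref m) (p : Fin n → Fin m → ℝ) : Prop :=
  ∀ i, ∀ o ∈ topSet m c (pref i), p i o = 1

/-- Ex post efficiency: `p` is a convex combination of SD-efficient discrete
assignments. -/
def ExPostEfficient (n m c : ℕ) (pref : Fin n → Pref m)
    (p : Fin n → Fin m → ℝ) : Prop :=
  ∃ (k : ℕ) (w : Fin k → ℝ) (d : Fin k → Fin n → Fin m → ℝ),
    (∀ j, 0 ≤ w j) ∧ (∑ j, w j = 1) ∧
    (∀ j, IsDiscreteMatrix n m (d j) ∧ IsRandomAssignment n m c (d j) ∧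
          SDEfficientAssignment n m c pref (d j)) ∧
    (∀ i o, p i o = ∑ j, w j * d j i o)

/-- A (possibly unbalanced) 0/1 allocation matrix: 0/1 entries, every object
assigned to exactly one agent. -/
def ZeroOneAlloc (n m : ℕ) (p : Fin n → Fin m → ℝ) : Prop :=
  (∀ i o, p i o = 0 ∨ p i o = 1) ∧ (∀ o, ∑ i, p i o = 1)

/-- Pareto optimality among 0/1 allocation matrices (w.r.t. SD comparisons). -/
def ParetoOptAlloc (n m : ℕ) (pref : Fin n → Pref m)
    (p : Fin n → Fin m → ℝ) : Prop :=
  ZeroOneAlloc n m p ∧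
  ¬ ∃ q : Fin n → Fin m → ℝ, ZeroOneAlloc n m q ∧
      (∀ i, sdPrefers (pref i) (q i) (p i)) ∧
      ∃ j, sdStrict (pref j) (q j) (p j)

/-- `p` is the outcome of the priority (serial dictator) rule for the agent
ordering `σ`: it is a discrete assignment in which, sequentially, agent
`σ k` receives his `c` most preferred objects among those not taken by the
earlier agents `σ 0, …, σ (k-1)`. -/
def PriorityOutcome (n m c : ℕ) (pref : Fin n → Pref m) (σ : Equiv.Perm (Fin n))
    (p : Fin n → Fin m → ℝ) : Prop :=
  IsDiscreteMatrix n m p ∧ IsRandomAssignment n m c p ∧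
  ∀ (k : Fin n) (o : Fin m), (∀ j, j < k → p (σ j) o ≠ 1) →
    (p (σ k) o = 1 ↔
      (univ.filter (fun o' => (∀ j, j < k → p (σ j) o' ≠ 1) ∧ pref (σ k) o' o)).card ≤ c)

/-- The strict preference induced by a ranking function (smaller rank =
more preferred). -/
def prefOfRank {m : ℕ} (r : Fin m → ℕ) : Pref m := fun a b => r a ≤ r b

/-- Rank of an object: number of weakly preferred objects. -/
noncomputable def rk {m : ℕ} (R : Pref m) (o : Fin m) : ℕ :=
  (univ.filter (fun o' => R o' o)).card

lemma rk_pos {m : ℕ} {R : Pref m} (hR : IsStrictPref R) (o : Fin m) : 1 ≤ rk R o :=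
  Finset.card_pos.mpr ⟨o, by simp [hR.1 o]⟩

lemma rk_le {m : ℕ} (R : Pref m) (o : Fin m) : rk R o ≤ m := by
  simpa [rk] using Finset.card_filter_le (univ : Finset (Fin m)) (fun o' => R o' o)

lemma R_iff_rk {m : ℕ} {R : Pref m} (hR : IsStrictPref R) (a b : Fin m) :
    R a b ↔ rk R a ≤ rk R b := by
  obtain ⟨hrefl, htrans, hanti, htot⟩ := hR
  constructor
  · intro h
    apply Finset.card_le_card
    intro o' ho'
    simp only [Finset.mem_filter, Finset.mem_univ, true_and] at ho' ⊢
    exact htrans _ _ _ ho' h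
  · intro h
    by_contra hab
    rcases htot a b with h1 | h1
    · exact hab h1
    have hsub : univ.filter (fun o' => R o' b) ⊆ univ.filter (fun o' => R o' a) := by
      intro o' ho'
      simp only [Finset.mem_filter, Finset.mem_univ, true_and] at ho' ⊢
      exact htrans _ _ _ ho' h1
    have hss : univ.filter (fun o' => R o' b) ⊂ univ.filter (fun o' => R o' a) := by
      refine (Finset.ssubset_iff_of_subset hsub).mpr ⟨a, ?_, ?_⟩
      · simp [hrefl a]
      · simp [hab]
    have := Finset.card_lt_card hss
    simp only [rk] at h
    omega

lemma rk_inj {m : ℕ} {R : Pref m} (hR : IsStrictPref R) {a b : Fin m}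
    (h : rk R a = rk R b) : a = b :=
  hR.2.2.1 a b ((R_iff_rk hR a b).mpr h.le) ((R_iff_rk hR b a).mpr h.ge)

lemma card_rk_le {m : ℕ} {R : Pref m} (hR : IsStrictPref R) (k : ℕ) (hk : k ≤ m) :
    (univ.filter (fun o => rk R o ≤ k)).card = k := by
  have h1 : (univ.filter (fun o => rk R o ≤ k)).card ≤ (Finset.Icc 1 k).card := by
    apply Finset.card_le_card_of_injOn (rk R)
    · intro o ho
      simp only [Finset.mem_coe, Finset.mem_filter, Finset.mem_univ, true_and] at ho
      exact Finset.mem_Icc.mpr ⟨rk_pos hR o, ho⟩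
    · intro a _ b _ hab
      exact rk_inj hR hab
  have h2 : (univ.filter (fun o => ¬ rk R o ≤ k)).card ≤ (Finset.Icc (k+1) m).card := by
    apply Finset.card_le_card_of_injOn (rk R)
    · intro o ho
      simp only [Finset.mem_coe, Finset.mem_filter, Finset.mem_univ, true_and, not_le] at ho
      exact Finset.mem_Icc.mpr ⟨ho, rk_le R o⟩
    · intro a _ b _ hab
      exact rk_inj hR hab
  have h3 := Finset.card_filter_add_card_filter_not
    (s := (univ : Finset (Fin m))) (p := fun o => rk R o ≤ k)
  simp only [Finset.card_univ, Fintype.card_fin] at h3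
  rw [Nat.card_Icc] at h1 h2
  omega

/-- If all upper-contour sums agree then the allocations agree. -/
lemma eq_of_upper_sums {m : ℕ} {R : Pref m} (hR : IsStrictPref R) (x y : Fin m → ℝ)
    (h : ∀ o, ∑ o' ∈ univ.filter (fun o' => R o' o), x o' =
              ∑ o' ∈ univ.filter (fun o' => R o' o), y o') : x = y := by
  have key : ∀ k : ℕ, ∀ o : Fin m, rk R o ≤ k → x o = y o := by
    intro k
    induction k with
    | zero => intro o ho; have := rk_pos hR o; omega
    | succ k ih =>
      intro o ho
      set U := univ.filter (fun o' => R o' o) with hU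
      have hoU : o ∈ U := by simp [hU, hR.1 o]
      have herase : ∑ o' ∈ U.erase o, x o' = ∑ o' ∈ U.erase o, y o' := by
        apply Finset.sum_congr rfl
        intro o' ho'
        obtain ⟨hne, hmem⟩ := Finset.mem_erase.mp ho'
        have hle : rk R o' ≤ rk R o :=
          (R_iff_rk hR o' o).mp (by simpa [hU] using hmem)
        have hlt : rk R o' < rk R o := lt_of_le_of_ne hle (fun he => hne (rk_inj hR he))
        exact ih o' (by omega)
      have h1 := Finset.sum_erase_add U x hoU
      have h2 := Finset.sum_erase_add U y hoU
      have h3 := h o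
      rw [← hU] at h3
      linarith
  funext o
  exact key m o (rk_le R o)

/-- A perfect row is the indicator of the top `c` objects. -/
lemma perfect_vals {m c : ℕ} (hcm : c ≤ m) {R : Pref m} (hR : IsStrictPref R)
    (x : Fin m → ℝ) (hx0 : ∀ o, 0 ≤ x o) (hxsum : ∑ o, x o = (c : ℝ))
    (hxT : ∀ o ∈ topSet m c R, x o = 1) :
    ∀ o, x o = if rk R o ≤ c then 1 else 0 := by
  have hT : topSet m c R = univ.filter (fun o => rk R o ≤ c) := rfl
  have hcard : (topSet m c R).card = c := by rw [hT]; exact card_rk_le hR c hcm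
  have hsumT : ∑ o ∈ topSet m c R, x o = (c : ℝ) := by
    rw [Finset.sum_congr rfl hxT, Finset.sum_const, hcard]; simp
  have hsplit := Finset.sum_sdiff (f := x) (Finset.subset_univ (topSet m c R))
  have hzero : ∑ o ∈ univ \ topSet m c R, x o = 0 := by
    have : ∑ o ∈ univ \ topSet m c R, x o + ∑ o ∈ topSet m c R, x o = (c : ℝ) := by
      rw [hsplit]; exact hxsum
    linarith
  have hall0 : ∀ o ∈ univ \ topSet m c R, x o = 0 :=
    (Finset.sum_eq_zero_iff_of_nonneg (fun o _ => hx0 o)).mp hzero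
  intro o
  by_cases hoc : rk R o ≤ c
  · rw [if_pos hoc]
    exact hxT o (by rw [hT]; simp [hoc])
  · rw [if_neg hoc]
    exact hall0 o (by rw [hT]; simp [hoc])

/-- The indicator of the top `c` objects SD-dominates any feasible row. -/
lemma perfect_sd {m c : ℕ} (hcm : c ≤ m) {R : Pref m} (hR : IsStrictPref R)
    (x y : Fin m → ℝ) (hxv : ∀ o, x o = if rk R o ≤ c then (1:ℝ) else 0)
    (hy0 : ∀ o, 0 ≤ y o) (hy1 : ∀ o, y o ≤ 1) (hysum : ∑ o, y o = (c : ℝ)) :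
    sdPrefers R x y := by
  intro o
  set U := univ.filter (fun o' => R o' o) with hU
  have hUcard : U.card = rk R o := rfl
  have hUf : U.filter (fun o' => rk R o' ≤ c)
      = univ.filter (fun o' => rk R o' ≤ min (rk R o) c) := by
    ext o'
    simp only [hU, Finset.mem_filter, Finset.mem_univ, true_and, le_min_iff,
      R_iff_rk hR]
  have hLHS : ∑ o' ∈ U, x o' = ((min (rk R o) c : ℕ) : ℝ) := by
    rw [Finset.sum_congr rfl (fun o' _ => hxv o'), Finset.sum_ite,
      Finset.sum_const, Finset.sum_const, hUf,
      card_rk_le hR _ (le_trans (min_le_right _ _) hcm)]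
    simp
  have hR1 : ∑ o' ∈ U, y o' ≤ (rk R o : ℝ) := by
    have h1 : ∑ o' ∈ U, y o' ≤ ∑ o' ∈ U, (1:ℝ) :=
      Finset.sum_le_sum (fun o' _ => hy1 o')
    have h2 : ∑ o' ∈ U, (1:ℝ) = (rk R o : ℝ) := by
      rw [Finset.sum_const, hUcard]; simp
    linarith
  have hR2 : ∑ o' ∈ U, y o' ≤ (c : ℝ) := by
    have h1 : ∑ o' ∈ U, y o' ≤ ∑ o', y o' :=
      Finset.sum_le_sum_of_subset_of_nonneg (Finset.subset_univ _)
        (fun o' _ _ => hy0 o')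
    linarith
  rw [hLHS]
  rcases le_total (rk R o) c with hmin | hmin
  · rw [min_eq_left hmin]; exact hR1
  · rw [min_eq_right hmin]; exact hR2

/-- Ex post efficiency implies unanimity: if a profile admits
a perfect assignment `p`, every ex post efficient random assignment for that
profile equals `p`; consequently every ex post efficient assignment rule
satisfies unanimity. -/
theorem expost_implies_unanimity (n c : ℕ) :
    (∀ (pref : Fin n → Pref (n * c)) (p q : Fin n → Fin (n * c) → ℝ),
        ValidProfile pref →
        IsRandomAssignment n (n * c) c p → PerfectAssignment n (n * c) c pref p →
        IsRandomAssignment n (n * c) c q → ExPostEfficient n (n * c) c pref q →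
        q = p) ∧
    (∀ f : (Fin n → Pref (n * c)) → Fin n → Fin (n * c) → ℝ,
        (∀ pref, ValidProfile pref →
            IsRandomAssignment n (n * c) c (f pref) ∧
            ExPostEfficient n (n * c) c pref (f pref)) →
        ∀ (pref : Fin n → Pref (n * c)) (p : Fin n → Fin (n * c) → ℝ),
          ValidProfile pref →
          IsRandomAssignment n (n * c) c p → PerfectAssignment n (n * c) c pref p →
          f pref = p) := by
  have main : ∀ (pref : Fin n → Pref (n * c)) (p q : Fin n → Fin (n * c) → ℝ),
      ValidProfile pref →
      IsRandomAssignment n (n * c) c p → PerfectAssignment n (n * c) c pref p →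
      IsRandomAssignment n (n * c) c q → ExPostEfficient n (n * c) c pref q →
      q = p := by
    intro pref p q hval hp hperf hq hexp
    rcases Nat.eq_zero_or_pos n with hn | hn
    · subst hn; funext i; exact i.elim0
    have hcm : c ≤ n * c := Nat.le_mul_of_pos_left c hn
    have hpv : ∀ i o, p i o = if rk (pref i) o ≤ c then (1:ℝ) else 0 := fun i =>
      perfect_vals hcm (hval i) (p i) (fun o => (hp.1 i o).1) (hp.2.2 i) (hperf i)
    obtain ⟨k, w, d, hw0, hw1, hd, hqeq⟩ := hexp
    have hdp : ∀ j, d j = p := by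
      intro j
      by_contra hne
      obtain ⟨hdisc, hra, heff⟩ := hd j
      apply heff
      obtain ⟨i, hi⟩ := Function.ne_iff.mp hne
      have hsd : ∀ i', sdPrefers (pref i') (p i') (d j i') := fun i' =>
        perfect_sd hcm (hval i') (p i') (d j i') (hpv i')
          (fun o => (hra.1 i' o).1) (fun o => (hra.1 i' o).2) (hra.2.2 i')
      refine ⟨p, hp, hsd, i, hsd i, fun hcon => hi ?_⟩
      exact eq_of_upper_sums (hval i) (d j i) (p i)
        (fun o => le_antisymm (hsd i o) (hcon o))
    funext i o
    rw [hqeq]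
    simp only [hdp]
    rw [← Finset.sum_mul, hw1, one_mul]
  exact ⟨main, fun f hf pref p hval hp hperf =>
    main pref p (f pref) hval hp hperf (hf pref hval).1 (hf pref hval).2⟩
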